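/- Let R(s,t) be the formal power series solution of R(s,t)·(1 + s²t/(1−s)) = (2st/(1−s))·(B(1,t) − B(s,t)) + (st/(1−s))·R(1,t), where B(s,t) = st/(1−2st). Then R(1,t) = 1/√(1−4t) − 1/(1−2t). -/

import Mathlib

open PowerSeries

/-- The generating function of the Catalan numbers. -/
noncomputable def Cgf : PowerSeries ℚ := PowerSeries.mk fun n => (catalan n : ℚ)

lemma Cgf_eq : Cgf = 1 + X * Cgf ^ 2 := by
  ext n
  cases n with
  | zero => simp [Cgf]
  | succ n =>
    rw [map_add, coeff_succ_X_mul, pow_two, coeff_mul]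
    have h1 : coeff (n+1) (1 : PowerSeries ℚ) = 0 := by simp
    rw [h1, zero_add]
    simp only [Cgf, coeff_mk]
    rw [catalan_succ']
    push_cast
    rfl

lemma constantCoeff_Cgf : constantCoeff Cgf = 1 := by
  rw [← coeff_zero_eq_constantCoeff]
  simp [Cgf]

/-- Kernel method: if `R(s,t)` satisfies
`R(s,t)·((1−s) + s²t) = 2st·(B(1,t) − B(s,t)) + st·R(1,t)` for all `s`, where
`B(s,t) = st/(1−2st)`, then `R(1,t) = 1/√(1−4t) − 1/(1−2t)`, where
`1/√(1−4t) = Σ_{n≥0} C(2n,n) tⁿ`. -/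
theorem kernel_method_R
    (B R : PowerSeries ℚ → PowerSeries ℚ)
    (hB : ∀ s : PowerSeries ℚ, B s = s * X * (1 - 2 * s * X)⁻¹)
    (hR : ∀ s : PowerSeries ℚ,
      R s * ((1 - s) + s ^ 2 * X) = 2 * s * X * (B 1 - B s) + s * X * R 1)
    (S : PowerSeries ℚ) (hS : ∀ n : ℕ, coeff n S = ((2 * n).choose n : ℚ)) :
    R 1 = S - (1 - 2 * X)⁻¹ := by
  have hC := Cgf_eq
  -- constant coefficient of S
  have hS0 : constantCoeff S = 1 := by
    have := hS 0
    rw [coeff_zero_eq_constantCoeff] at this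
    simpa using this
  -- the ODE satisfied by S
  have hODE : (1 - 4 * X) * (d⁄dX ℚ S) = 2 * S := by
    have h4 : (1 - 4 * X) * (d⁄dX ℚ S) = d⁄dX ℚ S - (C 4) * (X * d⁄dX ℚ S) := by
      rw [map_ofNat]; ring
    have h2 : (2 : PowerSeries ℚ) * S = (C 2) * S := by rw [map_ofNat]
    rw [h4, h2]
    ext n
    rw [map_sub, coeff_C_mul, coeff_C_mul]
    cases n with
    | zero =>
      simp [coeff_derivative, hS]
    | succ n =>
      rw [coeff_succ_X_mul, coeff_derivative, coeff_derivative, hS, hS]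
      have key : ((n+1) + 1 : ℚ) * ((2 * (n+1+1)).choose (n+1+1) : ℚ)
          = 2 * (2 * (n+1) + 1) * ((2*(n+1)).choose (n+1) : ℚ) := by
        have := Nat.succ_mul_centralBinom_succ (n+1)
        simp only [Nat.centralBinom] at this
        exact_mod_cast this
      push_cast at key ⊢
      ring_nf at key ⊢
      linarith
  -- S² (1 - 4X) = 1
  have hA : S ^ 2 * (1 - 4 * X) = 1 := by
    apply derivative.ext
    · have hL := Derivation.leibniz (d⁄dX ℚ) (S ^ 2) (1 - 4 * X)
      have hP : d⁄dX ℚ (S ^ 2) = 2 * S * d⁄dX ℚ S := by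
        rw [pow_two, Derivation.leibniz, smul_eq_mul]; ring
      have hX : d⁄dX ℚ (1 - 4 * X) = -4 := by
        have h4 : (4 : PowerSeries ℚ) * X = (C 4) * X := by rw [map_ofNat]
        rw [map_sub, h4, Derivation.leibniz, smul_eq_mul, smul_eq_mul]
        rw [derivative_C, show (d⁄dX ℚ) (1 : PowerSeries ℚ) = 0 from by
          rw [← map_one (C : ℚ →+* PowerSeries ℚ)]; exact derivative_C (r := 1), derivative_X]
        ring_nf
        rw [map_ofNat]
      have h1 : d⁄dX ℚ (1 : PowerSeries ℚ) = 0 := by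
        rw [← map_one (C : ℚ →+* PowerSeries ℚ)]; exact derivative_C (r := 1)
      rw [hL, hP, hX, smul_eq_mul, smul_eq_mul, h1]
      linear_combination 2 * S * hODE
    · simp [hS0]
  -- (1 - 2 Cgf X)² = 1 - 4X
  have hD2 : (1 - 2 * Cgf * X) ^ 2 = 1 - 4 * X := by
    linear_combination (-4 * X) * hC
  -- S (1 - 2 Cgf X) = 1
  have hU : S * (1 - 2 * Cgf * X) = 1 := by
    have hsq : (S * (1 - 2 * Cgf * X)) ^ 2 = 1 := by
      rw [mul_pow, hD2]; exact hA
    have hfac : (S * (1 - 2 * Cgf * X) - 1) * (S * (1 - 2 * Cgf * X) + 1) = 0 := by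
      linear_combination hsq
    rcases mul_eq_zero.mp hfac with h | h
    · exact sub_eq_zero.mp h
    · exfalso
      have hc : constantCoeff (S * (1 - 2 * Cgf * X) + 1) = 2 := by
        simp [hS0, constantCoeff_Cgf]; norm_num
      rw [h] at hc
      simp at hc
  -- (1 - 2 Cgf X)⁻¹ = S
  have hDinv : (1 - 2 * Cgf * X)⁻¹ = S := by
    have hcd : constantCoeff (1 - 2 * Cgf * X) ≠ 0 := by
      simp [constantCoeff_Cgf]
    symm
    rw [eq_inv_iff_mul_eq_one hcd]
    exact hU
  -- (1 - 2X) has an inverse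
  have hEinv : (1 - 2 * X : PowerSeries ℚ) * (1 - 2 * X)⁻¹ = 1 := by
    apply PowerSeries.mul_inv_cancel
    simp
  -- the kernel vanishes at Cgf
  have hker : (1 - Cgf) + Cgf ^ 2 * X = 0 := by
    linear_combination -hC
  have hRC := hR Cgf
  rw [hker, mul_zero] at hRC
  have hcx : Cgf * X * R 1 = 2 * Cgf * X * (B Cgf - B 1) := by
    linear_combination -hRC
  rw [hB Cgf, hB 1, hDinv] at hcx
  rw [show (1 - 2 * (1 : PowerSeries ℚ) * X) = 1 - 2 * X from by ring] at hcx
  have hCX : Cgf * X ≠ 0 := by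
    apply mul_ne_zero
    · intro h
      have := constantCoeff_Cgf
      rw [h] at this
      simp at this
    · exact X_ne_zero
  apply mul_left_cancel₀ hCX
  linear_combination hcx - (Cgf * X) * hU + (Cgf * X) * hEinv
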